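/- Let $\lambda, \mu \ge 0$ and $\{u_k\}_{k \in \mathbb{Z}}$ a log-concave sequence of nonnegative reals (no internal zeros). Define $a(n,k) = \mathcal{L}^n[\lambda,\mu](u)_k$ where $\mathcal{L}[\lambda,\mu](u)_k = \lambda u_k + \mu u_{k-1}$. Then the triangle $\{a(n,k)\}_{0 \le k \le n}$ is double LC-positive; that is, for each $r$, both sequences of polynomials $\sum_{k=r}^n a(n,k)q^k$ and $\sum_{k=r}^n a(n,n-k)q^k$ (in $n$) are $q$-log-concave. -/

import Mathlib

open Polynomial Finset

/-- The operator `ℒ[λ,μ]` on doubly infinite sequences: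
`ℒ(u)_k = λ u_k + μ u_{k-1}`. -/
def Lop (lam mu : ℝ) (u : ℤ → ℝ) : ℤ → ℝ := fun k => lam * u k + mu * u (k - 1)

private def IsSLC (v : ℤ → ℝ) : Prop := ∀ a b : ℤ, b ≤ a + 1 → v (a + 1) * v (b - 1) ≤ v a * v b

private lemma slc_aux (u : ℤ → ℝ) (h0 : ∀ k, 0 ≤ u k)
    (hulc : ∀ k : ℤ, u (k - 1) * u (k + 1) ≤ u k ^ 2)
    (huniz : ∀ i j k : ℤ, i < j → j < k → u i ≠ 0 → u k ≠ 0 → u j ≠ 0) :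
    ∀ d : ℕ, ∀ a b : ℤ, a + 1 = b + d → u (a + 1) * u (b - 1) ≤ u a * u b := by
  intro d
  induction d with
  | zero =>
    intro a b h
    obtain rfl : b = a + 1 := by omega
    have e : a + 1 - 1 = a := by ring
    rw [e, mul_comm]
  | succ d ih =>
    intro a b h
    have hab : a = b + (d : ℤ) := by push_cast at h; omega
    have IH := ih (a - 1) b (by omega)
    have e1 : a - 1 + 1 = a := by ring
    rw [e1] at IH
    by_cases hb : u b = 0
    · have hX : u (a + 1) * u (b - 1) = 0 := by
        by_contra hX
        obtain ⟨h1, h2⟩ := mul_ne_zero_iff.mp hX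
        exact huniz (b - 1) b (a + 1) (by omega) (by omega) h2 h1 hb
      rw [hb, mul_zero]
      exact hX.le
    · by_cases ha1 : u (a - 1) = 0
      · by_cases hba : b < a - 1
        · have hz : u (a + 1) = 0 := by
            by_contra hz
            exact huniz b (a - 1) (a + 1) hba (by omega) hb hz ha1
          rw [hz, zero_mul]
          exact mul_nonneg (h0 a) (h0 b)
        · have hcases : a - 1 = b - 1 ∨ a - 1 = b := by omega
          rcases hcases with h' | h'
          · have hz : u (b - 1) = 0 := by rw [← h']; exact ha1
            rw [hz, mul_zero]
            exact mul_nonneg (h0 a) (h0 b)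
          · exact absurd (h' ▸ ha1) hb
      · have hM : 0 < u (a - 1) * u b :=
          lt_of_le_of_ne (mul_nonneg (h0 _) (h0 _)) (Ne.symm (mul_ne_zero ha1 hb))
        have hLC := hulc a
        nlinarith [mul_le_mul_of_nonneg_right hLC (mul_nonneg (h0 (b - 1)) (h0 b)),
          mul_le_mul_of_nonneg_right IH (mul_nonneg (h0 a) (h0 b)),
          hM, h0 (a + 1), h0 (b - 1), h0 a, h0 b, h0 (a - 1)]

private lemma isSLC_base (u : ℤ → ℝ) (h0 : ∀ k, 0 ≤ u k)
    (hulc : ∀ k : ℤ, u (k - 1) * u (k + 1) ≤ u k ^ 2)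
    (huniz : ∀ i j k : ℤ, i < j → j < k → u i ≠ 0 → u k ≠ 0 → u j ≠ 0) :
    IsSLC u := by
  intro a b hba
  obtain ⟨d, hd⟩ := Int.eq_ofNat_of_zero_le (show (0:ℤ) ≤ a + 1 - b by omega)
  exact slc_aux u h0 hulc huniz d a b (by omega)

private lemma Lop_nonneg (lam mu : ℝ) (hlam : 0 ≤ lam) (hmu : 0 ≤ mu) (v : ℤ → ℝ)
    (h0 : ∀ k, 0 ≤ v k) : ∀ k, 0 ≤ Lop lam mu v k := fun k =>
  add_nonneg (mul_nonneg hlam (h0 _)) (mul_nonneg hmu (h0 _))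

private lemma isSLC_Lop (lam mu : ℝ) (hlam : 0 ≤ lam) (hmu : 0 ≤ mu) (v : ℤ → ℝ)
    (hv : IsSLC v) : IsSLC (Lop lam mu v) := by
  intro a b hba
  rcases hba.lt_or_eq with hlt | heq
  · have hb : b ≤ a := by omega
    have t1 := hv a b (by omega)
    have t2 := hv a (b - 1) (by omega)
    have t3 := hv (a - 1) b (by omega)
    have t4 := hv (a - 1) (b - 1) (by omega)
    have e1 : a - 1 + 1 = a := by ring
    rw [e1] at t3 t4
    simp only [Lop]
    have e2 : a + 1 - 1 = a := by ring
    rw [e2]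
    nlinarith [mul_nonneg (mul_nonneg hlam hlam) (sub_nonneg.2 t1),
      mul_nonneg (mul_nonneg hlam hmu) (sub_nonneg.2 t2),
      mul_nonneg (mul_nonneg hlam hmu) (sub_nonneg.2 t3),
      mul_nonneg (mul_nonneg hmu hmu) (sub_nonneg.2 t4)]
  · subst heq
    have e : a + 1 - 1 = a := by ring
    rw [e, mul_comm]

private lemma isSLC_reflect (v : ℤ → ℝ) (hv : IsSLC v) (c : ℤ) :
    IsSLC (fun j => v (c - j)) := by
  intro a b hba
  have h := hv (c - b) (c - a) (by omega)
  have e1 : c - b + 1 = c - (b - 1) := by ring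
  have e2 : c - a - 1 = c - (a + 1) := by ring
  rw [e1, e2] at h
  simp only
  nlinarith [h]

private noncomputable def Qp (w : ℤ → ℝ) (r n : ℕ) : ℝ[X] :=
  ∑ k ∈ Icc r n, C (w (k : ℤ)) * X ^ k

private lemma Icc_peel {M : Type*} [AddCommMonoid M] (f : ℕ → M) (r m : ℕ) (h : r ≤ m + 1) :
    ∑ k ∈ Icc r (m + 1), f k = f r + ∑ k ∈ Icc r m, f (k + 1) := by
  rw [← Finset.Ico_add_one_right_eq_Icc, ← Finset.Ico_add_one_right_eq_Icc,
    Finset.sum_eq_sum_Ico_succ_bot (by omega : r < m + 1 + 1) f]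
  congr 1
  exact (Finset.sum_Ico_add' f r (m + 1) 1).symm

private lemma Qp_shift (w : ℤ → ℝ) (r m : ℕ) (h : r ≤ m + 1) :
    ∑ k ∈ Icc r (m + 1), C (w ((k : ℤ) - 1)) * X ^ k
      = C (w ((r : ℤ) - 1)) * X ^ r + X * Qp w r m := by
  rw [Icc_peel (fun k => C (w ((k : ℤ) - 1)) * X ^ k) r m h]
  congr 1
  rw [Qp, Finset.mul_sum]
  refine Finset.sum_congr rfl fun k _ => ?_
  rw [show (((k + 1 : ℕ) : ℤ) - 1) = (k : ℤ) from by push_cast; ring]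
  ring

private lemma Qp_rec (lam mu : ℝ) (w w' : ℤ → ℝ)
    (hw' : ∀ k : ℤ, w' k = lam * w k + mu * w (k - 1)) (r m : ℕ) (h : r ≤ m + 1) :
    Qp w' r (m + 1) = (C lam + C mu * X) * Qp w r m
      + C (lam * w ((m : ℤ) + 1)) * X ^ (m + 1) + C (mu * w ((r : ℤ) - 1)) * X ^ r := by
  have step : ∀ k ∈ Icc r (m + 1), C (w' (k : ℤ)) * X ^ k
      = C lam * (C (w (k : ℤ)) * X ^ k) + C mu * (C (w ((k : ℤ) - 1)) * X ^ k) := by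
    intro k _
    rw [hw', C_add, C_mul, C_mul]
    ring
  rw [Qp, Finset.sum_congr rfl step, Finset.sum_add_distrib, ← Finset.mul_sum, ← Finset.mul_sum,
    Finset.sum_Icc_succ_top h, Qp_shift w r m h]
  rw [show ((m + 1 : ℕ) : ℤ) = (m : ℤ) + 1 from by push_cast; ring]
  rw [Qp]
  simp only [C_mul]
  ring

private lemma K1 (b c : ℤ → ℝ) (r m : ℕ) (h : r ≤ m) :
    C (b ((m : ℤ) + 1)) * X ^ (m + 1) * Qp c r (m + 1)
        - C (c ((m : ℤ) + 2)) * X ^ (m + 1 + 1) * Qp b r m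
      = C (b ((m : ℤ) + 1) * c (r : ℤ)) * X ^ (m + 1 + r)
        + ∑ k ∈ Icc r m,
            C (b ((m : ℤ) + 1) * c ((k : ℤ) + 1) - c ((m : ℤ) + 2) * b (k : ℤ))
              * X ^ (m + 1 + 1 + k) := by
  rw [Qp, Qp, Finset.mul_sum, Finset.mul_sum,
    Icc_peel (fun k => C (b ((m : ℤ) + 1)) * X ^ (m + 1) * (C (c (k : ℤ)) * X ^ k)) r m
      (by omega), add_sub_assoc, ← Finset.sum_sub_distrib]
  congr 1
  · rw [C_mul]; ring
  · refine Finset.sum_congr rfl fun k _ => ?_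
    rw [show (((k + 1 : ℕ)) : ℤ) = (k : ℤ) + 1 from by push_cast; ring]
    simp only [C_sub, C_mul]
    ring

private lemma K2 (b c : ℤ → ℝ) (r m : ℕ) (h : r ≤ m + 1) :
    C (b ((r : ℤ) - 1)) * Qp c r (m + 1) - C (c ((r : ℤ) - 1)) * Qp b r m
      = C (b ((r : ℤ) - 1) * c ((m : ℤ) + 1)) * X ^ (m + 1)
        + ∑ k ∈ Icc r m,
            C (b ((r : ℤ) - 1) * c (k : ℤ) - c ((r : ℤ) - 1) * b (k : ℤ)) * X ^ k := by
  rw [Qp, Qp, Finset.sum_Icc_succ_top h, mul_add, Finset.mul_sum, Finset.mul_sum,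
    add_sub_right_comm, ← Finset.sum_sub_distrib]
  rw [add_comm]
  congr 1
  · rw [show ((m + 1 : ℕ) : ℤ) = (m : ℤ) + 1 from by push_cast; ring, C_mul, mul_assoc]
  · refine Finset.sum_congr rfl fun k _ => ?_
    simp only [C_sub, C_mul]
    ring

private lemma coeff_term_nonneg {e : ℝ} (he : 0 ≤ e) (d s : ℕ) :
    0 ≤ (C e * X ^ d).coeff s := by
  rw [coeff_C_mul, coeff_X_pow]
  split_ifs <;> simp [he]

private lemma genG (lam mu : ℝ) (hlam : 0 ≤ lam) (hmu : 0 ≤ mu) (w : ℕ → ℤ → ℝ)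
    (hrec : ∀ m, ∀ k : ℤ, w (m + 1) k = lam * w m k + mu * w m (k - 1))
    (h0 : ∀ m, ∀ k : ℤ, 0 ≤ w m k)
    (hslc : ∀ m, IsSLC (w m))
    (r m : ℕ) (hrm : r ≤ m) (t : ℕ) :
    0 ≤ ((Qp (w (m + 1)) r (m + 1)) ^ 2
        - Qp (w m) r m * Qp (w (m + 1 + 1)) r (m + 1 + 1)).coeff t := by
  have E1 := Qp_rec lam mu (w m) (w (m + 1)) (hrec m) r m (by omega)
  have E2 := Qp_rec lam mu (w (m + 1)) (w (m + 1 + 1)) (hrec (m + 1)) r (m + 1) (by omega)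
  rw [show ((m + 1 : ℕ) : ℤ) + 1 = (m : ℤ) + 2 from by push_cast; ring] at E2
  have master : (Qp (w (m + 1)) r (m + 1)) ^ 2
      - Qp (w m) r m * Qp (w (m + 1 + 1)) r (m + 1 + 1)
      = C lam * (C (w m ((m : ℤ) + 1) * w (m + 1) (r : ℤ)) * X ^ (m + 1 + r)
          + ∑ k ∈ Icc r m,
              C (w m ((m : ℤ) + 1) * w (m + 1) ((k : ℤ) + 1)
                  - w (m + 1) ((m : ℤ) + 2) * w m (k : ℤ)) * X ^ (m + 1 + 1 + k))
        + C mu * ((C (w m ((r : ℤ) - 1) * w (m + 1) ((m : ℤ) + 1)) * X ^ (m + 1)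
          + ∑ k ∈ Icc r m,
              C (w m ((r : ℤ) - 1) * w (m + 1) (k : ℤ)
                  - w (m + 1) ((r : ℤ) - 1) * w m (k : ℤ)) * X ^ k) * X ^ r) := by
    rw [← K1 (w m) (w (m + 1)) r m hrm, ← K2 (w m) (w (m + 1)) r m (by omega)]
    rw [E2, E1]
    simp only [C_mul]
    ring
  rw [master, coeff_add, coeff_C_mul, coeff_C_mul, coeff_mul_X_pow']
  have hT1 : ∀ s : ℕ, 0 ≤ (C (w m ((m : ℤ) + 1) * w (m + 1) (r : ℤ)) * X ^ (m + 1 + r)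
      + ∑ k ∈ Icc r m,
          C (w m ((m : ℤ) + 1) * w (m + 1) ((k : ℤ) + 1)
              - w (m + 1) ((m : ℤ) + 2) * w m (k : ℤ)) * X ^ (m + 1 + 1 + k)).coeff s := by
    intro s
    rw [coeff_add]
    refine add_nonneg (coeff_term_nonneg (mul_nonneg (h0 _ _) (h0 _ _)) _ _) ?_
    rw [finset_sum_coeff]
    refine Finset.sum_nonneg fun k hk => coeff_term_nonneg ?_ _ _
    obtain ⟨hk1, hk2⟩ := Finset.mem_Icc.mp hk
    have hs := hslc m ((m : ℤ) + 1) ((k : ℤ) + 1) (by omega)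
    rw [show ((m : ℤ) + 1) + 1 = (m : ℤ) + 2 from by ring,
      show ((k : ℤ) + 1) - 1 = (k : ℤ) from by ring] at hs
    have e1 := hrec m ((k : ℤ) + 1)
    have e2 := hrec m ((m : ℤ) + 2)
    rw [show ((k : ℤ) + 1) - 1 = (k : ℤ) from by ring] at e1
    rw [show ((m : ℤ) + 2) - 1 = (m : ℤ) + 1 from by ring] at e2
    rw [e1, e2]
    nlinarith [mul_nonneg hlam (sub_nonneg.mpr hs), mul_nonneg hmu (h0 m ((m : ℤ) + 1)),
      h0 m (k : ℤ)]
  have hT2 : ∀ s : ℕ, 0 ≤ (C (w m ((r : ℤ) - 1) * w (m + 1) ((m : ℤ) + 1)) * X ^ (m + 1)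
      + ∑ k ∈ Icc r m,
          C (w m ((r : ℤ) - 1) * w (m + 1) (k : ℤ)
              - w (m + 1) ((r : ℤ) - 1) * w m (k : ℤ)) * X ^ k).coeff s := by
    intro s
    rw [coeff_add]
    refine add_nonneg (coeff_term_nonneg (mul_nonneg (h0 _ _) (h0 _ _)) _ _) ?_
    rw [finset_sum_coeff]
    refine Finset.sum_nonneg fun k hk => coeff_term_nonneg ?_ _ _
    obtain ⟨hk1, hk2⟩ := Finset.mem_Icc.mp hk
    have hs := hslc m ((k : ℤ) - 1) ((r : ℤ) - 1) (by omega)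
    rw [show ((k : ℤ) - 1) + 1 = (k : ℤ) from by ring,
      show ((r : ℤ) - 1) - 1 = (r : ℤ) - 2 from by ring] at hs
    have e1 := hrec m (k : ℤ)
    have e2 := hrec m ((r : ℤ) - 1)
    rw [show ((r : ℤ) - 1) - 1 = (r : ℤ) - 2 from by ring] at e2
    rw [e1, e2]
    nlinarith [mul_nonneg hmu (sub_nonneg.mpr hs)]
  refine add_nonneg (mul_nonneg hlam (hT1 t)) (mul_nonneg hmu ?_)
  split_ifs with hrt
  · exact hT2 (t - r)
  · exact le_refl 0

/-- Theorem 3.1: for `λ, μ ≥ 0` and a nonnegative log-concave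
sequence `u : ℤ → ℝ` (no internal zeros), the triangle
`a(n,k) = ℒⁿ[λ,μ](u)_k` is double LC-positive: for each `r`, both sequences of
polynomials `∑_{k=r}^n a(n,k) q^k` and `∑_{k=r}^n a(n,n-k) q^k` are
q-log-concave in `n`. -/
theorem stmt_13 (lam mu : ℝ) (hlam : 0 ≤ lam) (hmu : 0 ≤ mu)
    (u : ℤ → ℝ)
    (hunonneg : ∀ k, 0 ≤ u k)
    (hulc : ∀ k : ℤ, u (k - 1) * u (k + 1) ≤ u k ^ 2)
    (huniz : ∀ i j k : ℤ, i < j → j < k → u i ≠ 0 → u k ≠ 0 → u j ≠ 0)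
    (a : ℕ → ℕ → ℝ)
    (ha : ∀ n k : ℕ, a n k = ((Lop lam mu)^[n] u) (k : ℤ))
    (A Astar : ℕ → ℕ → ℝ[X])
    (hA : ∀ r n : ℕ, A r n = ∑ k ∈ Icc r n, Polynomial.C (a n k) * X ^ k)
    (hAstar : ∀ r n : ℕ, Astar r n = ∑ k ∈ Icc r n, Polynomial.C (a n (n - k)) * X ^ k) :
    ∀ r n : ℕ, r + 1 ≤ n → ∀ t : ℕ,
      0 ≤ ((A r n) ^ 2 - A r (n - 1) * A r (n + 1)).coeff t ∧
      0 ≤ ((Astar r n) ^ 2 - Astar r (n - 1) * Astar r (n + 1)).coeff t := by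
  set v : ℕ → ℤ → ℝ := fun n => (Lop lam mu)^[n] u with hv
  have hvsucc : ∀ n : ℕ, ∀ k : ℤ, v (n + 1) k = lam * v n k + mu * v n (k - 1) := by
    intro n k
    simp only [hv, Function.iterate_succ_apply']
    rfl
  have hv0 : ∀ n, ∀ k : ℤ, 0 ≤ v n k := by
    intro n
    induction n with
    | zero => simpa [hv] using hunonneg
    | succ n ih =>
      intro k
      rw [hvsucc]
      exact add_nonneg (mul_nonneg hlam (ih _)) (mul_nonneg hmu (ih _))
  have hvslc : ∀ n, IsSLC (v n) := by
    intro n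
    induction n with
    | zero => simpa [hv] using isSLC_base u hunonneg hulc huniz
    | succ n ih =>
      have := isSLC_Lop lam mu hlam hmu (v n) ih
      intro x y hxy
      have h' := this x y hxy
      simpa only [Lop, ← hvsucc] using h'
  have hAQ : ∀ r n : ℕ, A r n = Qp (v n) r n := by
    intro r n
    rw [hA, Qp]
    exact Finset.sum_congr rfl fun k _ => by rw [ha]
  set W : ℕ → ℤ → ℝ := fun n j => v n ((n : ℤ) - j) with hW
  have hWsucc : ∀ n : ℕ, ∀ k : ℤ, W (n + 1) k = mu * W n k + lam * W n (k - 1) := by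
    intro n k
    simp only [hW]
    rw [hvsucc]
    rw [show ((n + 1 : ℕ) : ℤ) - k = ((n : ℤ) - (k - 1)) from by push_cast; ring,
      show ((n : ℤ) - (k - 1)) - 1 = (n : ℤ) - k from by ring]
    ring
  have hW0 : ∀ n, ∀ k : ℤ, 0 ≤ W n k := fun n k => hv0 n _
  have hWslc : ∀ n, IsSLC (W n) := fun n => isSLC_reflect (v n) (hvslc n) _
  have hAstarQ : ∀ r n : ℕ, Astar r n = Qp (W n) r n := by
    intro r n
    rw [hAstar, Qp]
    refine Finset.sum_congr rfl fun k hk => ?_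
    have hkn : k ≤ n := (Finset.mem_Icc.mp hk).2
    rw [ha, show ((n - k : ℕ) : ℤ) = (n : ℤ) - (k : ℤ) from by omega]
  intro r n hn t
  obtain ⟨m, rfl⟩ : ∃ m, n = m + 1 := ⟨n - 1, by omega⟩
  have hrm : r ≤ m := by omega
  rw [Nat.add_sub_cancel]
  constructor
  · rw [hAQ, hAQ, hAQ]
    exact genG lam mu hlam hmu v hvsucc hv0 hvslc r m hrm t
  · rw [hAstarQ, hAstarQ, hAstarQ]
    exact genG mu lam hmu hlam W hWsucc hW0 hWslc r m hrm t
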